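/- Let G = (V,E;w) be a finite simple undirected graph with positive vertex weights, let α* be its minimal α-ratio, and for α ≥ 0 define cap⁺(G,α) = min over nonempty B ⊆ V of [α·(w(V) − w(B)) + w(Γ(B))]. Then: (1) cap⁺(G,α) < α·w(V) if and only if α > α*; (2) cap⁺(G,α) = α·w(V) if and only if α = α*; (3) cap⁺(G,α) > α·w(V) if and only if α < α*. -/

import Mathlib

open Finset

/-- The total weight of a finite set of vertices. -/
def wsum {V : Type*} (w : V → ℝ) (S : Finset V) : ℝ := ∑ v ∈ S, w v

/-- The neighborhood `Γ(S)` of a set `S` of vertices: all vertices adjacent to at least one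
vertex of `S`. -/
def nbhd {V : Type*} [Fintype V] [DecidableEq V] (G : SimpleGraph V) [DecidableRel G.Adj]
    (S : Finset V) : Finset V :=
  univ.filter fun v => ∃ u ∈ S, G.Adj u v

/-- The α-ratio `α(S) = w(Γ(S)) / w(S)` of a set `S`. -/
noncomputable def alphaR {V : Type*} [Fintype V] [DecidableEq V] (G : SimpleGraph V)
    [DecidableRel G.Adj] (w : V → ℝ) (S : Finset V) : ℝ :=
  wsum w (nbhd G S) / wsum w S


/-- let `α* = capα` denote the minimal α-ratio and
`cap⁺(G,α) = min_{∅ ≠ B ⊆ V} [α·(w(V) − w(B)) + w(Γ(B))]`.  Then `cap⁺(G,α) < α·w(V)` iff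
`α > α*`, `cap⁺(G,α) = α·w(V)` iff `α = α*`, and `cap⁺(G,α) > α·w(V)` iff `α < α*`. -/
theorem capPlus_vs_alphaStar {V : Type*} [Fintype V] [DecidableEq V]
    (G : SimpleGraph V) [DecidableRel G.Adj] (w : V → ℝ) (hw : ∀ v, 0 < w v)
    (a astar capa : ℝ) (ha : 0 ≤ a)
    (hstar : IsLeast {r : ℝ | ∃ S : Finset V, S.Nonempty ∧ r = alphaR G w S} astar)
    (hcap : IsLeast {c : ℝ | ∃ B : Finset V, B.Nonempty ∧
        c = a * (wsum w univ - wsum w B) + wsum w (nbhd G B)} capa) :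
    (capa < a * wsum w univ ↔ astar < a) ∧
    (capa = a * wsum w univ ↔ a = astar) ∧
    (a * wsum w univ < capa ↔ a < astar) := by
  obtain ⟨⟨S0, hS0ne, hS0⟩, hstarlb⟩ := hstar
  obtain ⟨⟨B0, hB0ne, hB0⟩, hcaplb⟩ := hcap
  have hpos : ∀ S : Finset V, S.Nonempty → 0 < wsum w S := fun S hS =>
    Finset.sum_pos (fun v _ => hw v) hS
  have key : ∀ S : Finset V, S.Nonempty →
      a * (wsum w univ - wsum w S) + wsum w (nbhd G S) - a * wsum w univ
        = wsum w S * (alphaR G w S - a) := by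
    intro S hS
    have h := (hpos S hS).ne'
    field_simp [alphaR]
    have hm : wsum w S * alphaR G w S = wsum w (nbhd G S) := by
      rw [alphaR]; field_simp
    linear_combination -hm
  have h1 : capa < a * wsum w univ ↔ astar < a := by
    constructor
    · intro h
      have hk := key B0 hB0ne
      have h2 : wsum w B0 * (alphaR G w B0 - a) < 0 := by
        rw [← hk, ← hB0]; linarith
      have h3 : alphaR G w B0 < a := by nlinarith [hpos B0 hB0ne]
      have := hstarlb ⟨B0, hB0ne, rfl⟩
      linarith
    · intro h
      have hk := key S0 hS0ne
      have h2 : wsum w S0 * (alphaR G w S0 - a) < 0 := by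
        have := hpos S0 hS0ne
        nlinarith [hS0 ▸ h]
      have hle := hcaplb ⟨S0, hS0ne, rfl⟩
      linarith
  have h3 : a * wsum w univ < capa ↔ a < astar := by
    constructor
    · intro h
      have hk := key S0 hS0ne
      have hle := hcaplb ⟨S0, hS0ne, rfl⟩
      have h2 : 0 < wsum w S0 * (alphaR G w S0 - a) := by linarith
      have : a < alphaR G w S0 := by nlinarith [hpos S0 hS0ne]
      linarith [hS0 ▸ this]
    · intro h
      have hk := key B0 hB0ne
      have hge := hstarlb ⟨B0, hB0ne, rfl⟩
      have h2 : 0 < wsum w B0 * (alphaR G w B0 - a) := by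
        have := hpos B0 hB0ne
        nlinarith
      rw [hB0]; linarith
  refine ⟨h1, ?_, h3⟩
  constructor
  · intro h
    by_contra hne
    rcases lt_or_gt_of_ne hne with hlt | hgt
    · have := h3.mpr hlt; linarith
    · have := h1.mpr hgt; linarith
  · intro h
    by_contra hne
    rcases lt_or_gt_of_ne hne with hlt | hgt
    · have := h1.mp hlt; linarith
    · have := h3.mp hgt; linarith
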